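/- Let X be an (m+k)×(m+k) real symmetric matrix written in block form X = [[X₁₁, X₁₂], [X₁₂ᵀ, X₂₂]], where X₁₁ is m×m and X₂₂ is k×k. Then the block-diagonal matrix [[X₁₁, 0], [0, X₂₂]] is majorized by X. -/

import Mathlib

open Matrix

/-- `v` is majorized by `w`: for every `k`, the sum of the `k` largest entries of `v`
is at most the sum of the `k` largest entries of `w`, with equality for `k = n`.
Stated equivalently: every subset sum of `v` is dominated by some subset sum of `w`
of the same cardinality, and the total sums agree. -/
def VecMajorizedBy {ι : Type*} [Fintype ι] (v w : ι → ℝ) : Prop :=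
  (∀ s : Finset ι, ∃ t : Finset ι, t.card = s.card ∧ ∑ i ∈ s, v i ≤ ∑ i ∈ t, w i) ∧
    ∑ i, v i = ∑ i, w i

/-- `X` is majorized by `Y`: both are (real) symmetric and the eigenvalue vector of `X`
is majorized by the eigenvalue vector of `Y`. -/
def MatMajorizedBy {ι : Type*} [Fintype ι] [DecidableEq ι]
    (X Y : Matrix ι ι ℝ) : Prop :=
  ∃ (hX : X.IsHermitian) (hY : Y.IsHermitian),
    VecMajorizedBy hX.eigenvalues hY.eigenvalues

section Aux
open Finset
variable {ι : Type*} [Fintype ι] [DecidableEq ι]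

/-- Substochastic bound: if `0 ≤ d ≤ 1` pointwise and `∑ d = r`, then `∑ lam * d` is at most
the sum of `lam` over some subset of cardinality `r`. -/
lemma aux_substoch (lam d : ι → ℝ) (hd0 : ∀ j, 0 ≤ d j) (hd1 : ∀ j, d j ≤ 1)
    (r : ℕ) (hr : r ≤ Fintype.card ι) (hsum : ∑ j, d j = r) :
    ∃ t : Finset ι, t.card = r ∧ ∑ j, lam j * d j ≤ ∑ j ∈ t, lam j := by
  rcases Nat.eq_zero_or_pos r with rfl | hrpos
  · refine ⟨∅, rfl, ?_⟩
    have hdz : ∀ j ∈ Finset.univ, d j = 0 := by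
      intro j _
      have := Finset.sum_eq_zero_iff_of_nonneg (fun j _ => hd0 j) |>.mp (by simpa using hsum)
      exact this j (Finset.mem_univ j)
    simp only [Finset.sum_empty]
    rw [Finset.sum_congr rfl (fun j hj => by rw [hdz j hj, mul_zero])]
    simp
  -- pick a card-r subset maximizing the sum of lam
  have hne : (Finset.powersetCard r (Finset.univ : Finset ι)).Nonempty := by
    obtain ⟨t, ht, htc⟩ := Finset.exists_subset_card_eq (n := r) (s := (Finset.univ : Finset ι)) (by rw [Finset.card_univ]; exact hr)
    exact ⟨t, Finset.mem_powersetCard.mpr ⟨ht, htc⟩⟩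
  obtain ⟨t, htmem, htmax⟩ :=
    Finset.exists_max_image (Finset.powersetCard r (Finset.univ : Finset ι))
      (fun u => ∑ j ∈ u, lam j) hne
  obtain ⟨-, htcard⟩ := Finset.mem_powersetCard.mp htmem
  have htne : t.Nonempty := Finset.card_pos.mp (htcard ▸ hrpos)
  obtain ⟨j₀, hj₀, hmin⟩ := Finset.exists_min_image t lam htne
  set c := lam j₀ with hc
  -- outside t, lam ≤ c
  have hout : ∀ j ∉ t, lam j ≤ c := by
    intro j hj
    by_contra hlt
    push_neg at hlt
    have hjne : j ∉ t.erase j₀ := fun h => hj (Finset.erase_subset _ _ h)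
    set t' := insert j (t.erase j₀) with ht'
    have ht'card : t'.card = r := by
      rw [ht', Finset.card_insert_of_notMem hjne, Finset.card_erase_of_mem hj₀, htcard]
      omega
    have ht'mem : t' ∈ Finset.powersetCard r (Finset.univ : Finset ι) :=
      Finset.mem_powersetCard.mpr ⟨Finset.subset_univ _, ht'card⟩
    have hsum' : ∑ x ∈ t', lam x = lam j + (∑ x ∈ t, lam x - lam j₀) := by
      rw [ht', Finset.sum_insert hjne, Finset.sum_erase_eq_sub hj₀]
    have := htmax t' ht'mem
    simp only [hsum'] at this
    linarith
  refine ⟨t, htcard, ?_⟩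
  have key : ∑ j, (lam j - c) * d j ≤ ∑ j ∈ t, (lam j - c) := by
    rw [← Finset.sum_add_sum_compl t (fun j => (lam j - c) * d j)]
    have h1 : ∑ j ∈ t, (lam j - c) * d j ≤ ∑ j ∈ t, (lam j - c) := by
      apply Finset.sum_le_sum
      intro j hj
      have := hmin j hj
      nlinarith [hd0 j, hd1 j]
    have h2 : ∑ j ∈ tᶜ, (lam j - c) * d j ≤ 0 := by
      apply Finset.sum_nonpos
      intro j hj
      have hj' : j ∉ t := Finset.mem_compl.mp hj
      have := hout j hj'
      nlinarith [hd0 j]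
    linarith
  have e1 : ∑ j, (lam j - c) * d j = ∑ j, lam j * d j - c * r := by
    rw [Finset.sum_congr rfl (fun j _ => by ring : ∀ j ∈ Finset.univ,
      (lam j - c) * d j = lam j * d j - c * d j), Finset.sum_sub_distrib,
      ← Finset.mul_sum, hsum]
  have e2 : ∑ j ∈ t, (lam j - c) = ∑ j ∈ t, lam j - c * r := by
    rw [Finset.sum_sub_distrib, Finset.sum_const, htcard]
    ring_nf
  rw [e1, e2] at key
  linarith

/-- Ky Fan type bound for orthogonal conjugation of a diagonal matrix. -/
lemma aux_kyfan (M : Matrix ι ι ℝ) (hM1 : Mᵀ * M = 1) (hM2 : M * Mᵀ = 1)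
    (lam : ι → ℝ) (s : Finset ι) :
    ∃ t : Finset ι, t.card = s.card ∧
      ∑ i ∈ s, (Mᵀ * Matrix.diagonal lam * M) i i ≤ ∑ j ∈ t, lam j := by
  set d : ι → ℝ := fun j => ∑ i ∈ s, (M j i) ^ 2 with hd
  have hd0 : ∀ j, 0 ≤ d j := fun j => Finset.sum_nonneg fun i _ => sq_nonneg _
  have hd1 : ∀ j, d j ≤ 1 := by
    intro j
    have : ∑ i, (M j i) ^ 2 = 1 := by
      have := congrFun (congrFun hM2 j) j
      simpa [Matrix.mul_apply, Matrix.one_apply, sq] using this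
    calc d j ≤ ∑ i, (M j i) ^ 2 :=
          Finset.sum_le_sum_of_subset_of_nonneg (Finset.subset_univ s)
            (fun i _ _ => sq_nonneg _)
      _ = 1 := this
  have hdsum : ∑ j, d j = (s.card : ℝ) := by
    rw [hd]
    rw [Finset.sum_comm]
    have : ∀ i ∈ s, ∑ j, (M j i) ^ 2 = 1 := by
      intro i _
      have := congrFun (congrFun hM1 i) i
      simpa [Matrix.mul_apply, Matrix.one_apply, sq] using this
    rw [Finset.sum_congr rfl this]
    simp
  obtain ⟨t, htc, hle⟩ := aux_substoch lam d hd0 hd1 s.card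
    (by simpa using Finset.card_le_card (Finset.subset_univ s)) hdsum
  refine ⟨t, htc, ?_⟩
  have : ∑ i ∈ s, (Mᵀ * Matrix.diagonal lam * M) i i = ∑ j, lam j * d j := by
    have entry : ∀ i, (Mᵀ * Matrix.diagonal lam * M) i i = ∑ j, lam j * (M j i) ^ 2 := by
      intro i
      rw [Matrix.mul_assoc]
      simp only [Matrix.mul_apply, Matrix.transpose_apply, Matrix.diagonal_apply, ite_mul,
        zero_mul, Finset.sum_ite_eq, Finset.mem_univ, if_true, sq]
      exact Finset.sum_congr rfl fun j _ => by ring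
    rw [Finset.sum_congr rfl (fun i _ => entry i), Finset.sum_comm]
    simp [hd, Finset.mul_sum]
  rw [this]
  exact hle

/-- Sum of eigenvalues equals the trace (real case). -/
lemma aux_sum_eigenvalues {A : Matrix ι ι ℝ} (hA : A.IsHermitian) :
    ∑ i, hA.eigenvalues i = A.trace := by
  have h := hA.spectral_theorem
  have : A.trace = (Matrix.diagonal (RCLike.ofReal ∘ hA.eigenvalues) : Matrix ι ι ℝ).trace := by
    conv_lhs => rw [h]
    rw [Unitary.conjStarAlgAut_apply]
    rw [Matrix.trace_mul_cycle]
    rw [(Matrix.mem_unitaryGroup_iff').mp (hA.eigenvectorUnitary).2]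
    rw [Matrix.one_mul]
  rw [this, Matrix.trace_diagonal]
  simp [RCLike.ofReal]


end Aux

set_option maxHeartbeats 1000000 in
/-- Pinching inequality: for a real symmetric block matrix
`X = [[X₁₁, X₁₂], [X₁₂ᵀ, X₂₂]]`, the block-diagonal matrix `[[X₁₁, 0], [0, X₂₂]]` is
majorized by `X`. -/
theorem pinching_majorized {m k : ℕ}
    (X11 : Matrix (Fin m) (Fin m) ℝ) (X12 : Matrix (Fin m) (Fin k) ℝ)
    (X22 : Matrix (Fin k) (Fin k) ℝ)
    (hX : (Matrix.fromBlocks X11 X12 X12ᵀ X22).IsHermitian) :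
    MatMajorizedBy (Matrix.fromBlocks X11 0 0 X22) (Matrix.fromBlocks X11 X12 X12ᵀ X22) := by
  classical
  set A : Matrix (Fin m ⊕ Fin k) (Fin m ⊕ Fin k) ℝ := Matrix.fromBlocks X11 X12 X12ᵀ X22
    with hA_def
  set P : Matrix (Fin m ⊕ Fin k) (Fin m ⊕ Fin k) ℝ := Matrix.fromBlocks X11 0 0 X22
    with hP_def
  have h11 : X11ᴴ = X11 := by
    have := congrArg Matrix.toBlocks₁₁ hX
    simpa [hA_def, Matrix.fromBlocks_conjTranspose, Matrix.fromBlocks_transpose, Matrix.toBlocks_fromBlocks₁₁] using this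
  have h22 : X22ᴴ = X22 := by
    have := congrArg Matrix.toBlocks₂₂ hX
    simpa [hA_def, Matrix.fromBlocks_conjTranspose, Matrix.fromBlocks_transpose, Matrix.toBlocks_fromBlocks₂₂] using this
  have hP : P.IsHermitian := by
    rw [Matrix.IsHermitian, hP_def, Matrix.fromBlocks_conjTranspose, h11, h22]
    simp
  refine ⟨hP, hX, ?_, ?_⟩
  · -- the subset-sum condition
    set J : Matrix (Fin m ⊕ Fin k) (Fin m ⊕ Fin k) ℝ :=
      Matrix.fromBlocks (1 : Matrix (Fin m) (Fin m) ℝ) 0 0 (-1 : Matrix (Fin k) (Fin k) ℝ)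
      with hJ_def
    have hJt : Jᵀ = J := by
      simp [hJ_def, Matrix.fromBlocks_transpose]
    have hJJ : J * J = 1 := by
      simp [hJ_def, Matrix.fromBlocks_multiply, Matrix.fromBlocks_one]
    have hJAJ : J * A * J = Matrix.fromBlocks X11 (-X12) (-(X12ᵀ)) X22 := by
      simp [hJ_def, hA_def, Matrix.fromBlocks_multiply]
    have hPavg : P = (2⁻¹ : ℝ) • (A + J * A * J) := by
      rw [hJAJ, hA_def, hP_def, Matrix.fromBlocks_add, Matrix.fromBlocks_smul]
      have e1 : (2⁻¹ : ℝ) • (X11 + X11) = X11 := by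
        ext i j; simp [Matrix.smul_apply, Matrix.add_apply]; ring
      have e2 : (2⁻¹ : ℝ) • (X22 + X22) = X22 := by
        ext i j; simp [Matrix.smul_apply, Matrix.add_apply]; ring
      have e3 : (2⁻¹ : ℝ) • (X12 + -X12) = (0 : Matrix (Fin m) (Fin k) ℝ) := by simp
      have e4 : (2⁻¹ : ℝ) • (X12ᵀ + -X12ᵀ) = (0 : Matrix (Fin k) (Fin m) ℝ) := by simp
      rw [e1, e2, e3, e4]
    set U : Matrix (Fin m ⊕ Fin k) (Fin m ⊕ Fin k) ℝ := (hX.eigenvectorUnitary :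
      Matrix (Fin m ⊕ Fin k) (Fin m ⊕ Fin k) ℝ) with hU_def
    set V : Matrix (Fin m ⊕ Fin k) (Fin m ⊕ Fin k) ℝ := (hP.eigenvectorUnitary :
      Matrix (Fin m ⊕ Fin k) (Fin m ⊕ Fin k) ℝ) with hV_def
    have hstarU : star U = Uᵀ := by
      rw [Matrix.star_eq_conjTranspose]
      ext i j; simp [Matrix.conjTranspose_apply]
    have hstarV : star V = Vᵀ := by
      rw [Matrix.star_eq_conjTranspose]
      ext i j; simp [Matrix.conjTranspose_apply]
    have hU1 : Uᵀ * U = 1 := by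
      rw [← hstarU]; exact (Matrix.mem_unitaryGroup_iff').mp (hX.eigenvectorUnitary).2
    have hU2 : U * Uᵀ = 1 := by
      rw [← hstarU]; exact (Matrix.mem_unitaryGroup_iff).mp (hX.eigenvectorUnitary).2
    have hV1 : Vᵀ * V = 1 := by
      rw [← hstarV]; exact (Matrix.mem_unitaryGroup_iff').mp (hP.eigenvectorUnitary).2
    have hV2 : V * Vᵀ = 1 := by
      rw [← hstarV]; exact (Matrix.mem_unitaryGroup_iff).mp (hP.eigenvectorUnitary).2
    set lam := hX.eigenvalues with hlam_def
    set mu := hP.eigenvalues with hmu_def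
    have hoflam : (RCLike.ofReal ∘ lam : (Fin m ⊕ Fin k) → ℝ) = lam := by
      funext i; simp [RCLike.ofReal]
    have hofmu : (RCLike.ofReal ∘ mu : (Fin m ⊕ Fin k) → ℝ) = mu := by
      funext i; simp [RCLike.ofReal]
    have hAspec : A = U * Matrix.diagonal lam * Uᵀ := by
      rw [← hstarU, ← hoflam]; exact hX.spectral_theorem
    have hVP : Vᵀ * P * V = Matrix.diagonal mu := by
      rw [← hstarV, ← hofmu]; have h := hP.conjStarAlgAut_star_eigenvectorUnitary
      rw [Unitary.conjStarAlgAut_apply, Unitary.coe_star, star_star] at h; exact h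
    set M : Matrix (Fin m ⊕ Fin k) (Fin m ⊕ Fin k) ℝ := Uᵀ * V with hM_def
    set N : Matrix (Fin m ⊕ Fin k) (Fin m ⊕ Fin k) ℝ := Uᵀ * (J * V) with hN_def
    have hMt : Mᵀ = Vᵀ * U := by rw [hM_def, Matrix.transpose_mul, Matrix.transpose_transpose]
    have hNt : Nᵀ = Vᵀ * J * U := by
      rw [hN_def, Matrix.transpose_mul, Matrix.transpose_mul, Matrix.transpose_transpose, hJt,
        Matrix.mul_assoc]
    have hM1 : Mᵀ * M = 1 := by
      rw [hMt, hM_def]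
      calc Vᵀ * U * (Uᵀ * V) = Vᵀ * (U * Uᵀ) * V := by
            rw [Matrix.mul_assoc, Matrix.mul_assoc, Matrix.mul_assoc]
        _ = 1 := by rw [hU2, Matrix.mul_one, hV1]
    have hM2 : M * Mᵀ = 1 := by
      rw [hMt, hM_def]
      calc Uᵀ * V * (Vᵀ * U) = Uᵀ * (V * Vᵀ) * U := by
            rw [Matrix.mul_assoc, Matrix.mul_assoc, Matrix.mul_assoc]
        _ = 1 := by rw [hV2, Matrix.mul_one, hU1]
    have hN1 : Nᵀ * N = 1 := by
      rw [hNt, hN_def]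
      calc Vᵀ * J * U * (Uᵀ * (J * V)) = Vᵀ * J * (U * Uᵀ) * (J * V) := by
            simp only [Matrix.mul_assoc]
        _ = Vᵀ * (J * J) * V := by rw [hU2, Matrix.mul_one]; simp only [Matrix.mul_assoc]
        _ = 1 := by rw [hJJ, Matrix.mul_one, hV1]
    have hN2 : N * Nᵀ = 1 := by
      rw [hNt, hN_def]
      calc Uᵀ * (J * V) * (Vᵀ * J * U) = Uᵀ * (J * (V * Vᵀ) * J) * U := by
            simp only [Matrix.mul_assoc]
        _ = Uᵀ * U := by rw [hV2, Matrix.mul_one, hJJ, Matrix.mul_one]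
        _ = 1 := hU1
    have eM : Vᵀ * A * V = Mᵀ * Matrix.diagonal lam * M := by
      rw [hAspec, hMt, hM_def]
      simp only [Matrix.mul_assoc]
    have eN : Vᵀ * (J * A * J) * V = Nᵀ * Matrix.diagonal lam * N := by
      rw [hAspec, hNt, hN_def]
      simp only [Matrix.mul_assoc]
    intro s
    obtain ⟨t₁, ht₁c, ht₁⟩ := aux_kyfan M hM1 hM2 lam s
    obtain ⟨t₂, ht₂c, ht₂⟩ := aux_kyfan N hN1 hN2 lam s
    have hmain : ∑ i ∈ s, mu i ≤
        2⁻¹ * (∑ i ∈ s, (Mᵀ * Matrix.diagonal lam * M) i i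
          + ∑ i ∈ s, (Nᵀ * Matrix.diagonal lam * N) i i) := by
      have : ∑ i ∈ s, mu i = ∑ i ∈ s, (Vᵀ * P * V) i i := by
        rw [hVP]
        exact Finset.sum_congr rfl fun i _ => by simp [Matrix.diagonal_apply]
      rw [this]
      have hsplit : Vᵀ * P * V = (2⁻¹ : ℝ) • (Vᵀ * A * V + Vᵀ * (J * A * J) * V) := by
        rw [hPavg]
        rw [Matrix.mul_smul, Matrix.smul_mul]
        congr 1
        rw [Matrix.mul_add, Matrix.add_mul]
      rw [hsplit, eM, eN]
      have hterm : ∀ i ∈ s,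
          ((2⁻¹ : ℝ) • (Mᵀ * Matrix.diagonal lam * M + Nᵀ * Matrix.diagonal lam * N)) i i
          = 2⁻¹ * ((Mᵀ * Matrix.diagonal lam * M) i i + (Nᵀ * Matrix.diagonal lam * N) i i) :=
        fun i _ => by simp [Matrix.smul_apply, Matrix.add_apply]
      rw [Finset.sum_congr rfl hterm, ← Finset.mul_sum, Finset.sum_add_distrib]
    rcases le_total (∑ j ∈ t₁, lam j) (∑ j ∈ t₂, lam j) with hle | hle
    · exact ⟨t₂, ht₂c, by linarith⟩
    · exact ⟨t₁, ht₁c, by linarith⟩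
  · -- total sums agree
    rw [aux_sum_eigenvalues hP, aux_sum_eigenvalues hX]
    show P.trace = A.trace
    rw [hP_def, hA_def]
    simp [Matrix.trace, Matrix.diag, Fintype.sum_sum_type]
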